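/- Let M be a τ-rigid module over a finite-dimensional algebra A. Then for any module N, the tropical evaluation of the F-polynomial of N at the g-vector of M equals dim_k Hom_A(N, τM), i.e., max over quotient modules N₀ of N of ⟨g_M, dim N₀⟩ equals dim_k Hom_A(N, τM). -/
import Mathlib

/-- Auxiliary: composition with the quotient map, as a `k`-linear map between Hom spaces. -/
def compQ {k A : Type} [Field k] [Ring A] [Algebra k A]
    {N τM : Type} [AddCommGroup N] [Module A N]
    [AddCommGroup τM] [Module A τM] [Module k τM] [SMulCommClass A k τM]
    (S : Submodule A N) : ((N ⧸ S) →ₗ[A] τM) →ₗ[k] (N →ₗ[A] τM) where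
  toFun g := g ∘ₗ S.mkQ
  map_add' _ _ := rfl
  map_smul' _ _ := rfl

theorem compQ_injective {k A : Type} [Field k] [Ring A] [Algebra k A]
    {N τM : Type} [AddCommGroup N] [Module A N]
    [AddCommGroup τM] [Module A τM] [Module k τM] [SMulCommClass A k τM]
    (S : Submodule A N) : Function.Injective (compQ (k := k) (τM := τM) S) := by
  intro g₁ g₂ h
  ext x
  exact congrArg (fun f => f x) (congrArg DFunLike.coe h)

/-- For a τ-rigid module `M` and any module `N`, the tropical evaluation of the
F-polynomial of `N` at the g-vector of `M`, i.e. the maximum of `⟨g_M, dim N₀⟩` over all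
quotient modules `N₀` of `N`, equals `dim_k Hom_A(N, τM)`. -/
theorem trop_F_eval_g_eq_hom_tau (n : ℕ) (k A : Type) [Field k] [Ring A] [Algebra k A]
    [FiniteDimensional k A]
    (M : Type) [AddCommGroup M] [Module A M] [Module k M] [IsScalarTower k A M]
    [FiniteDimensional k M] [SMulCommClass A k M]
    (τM : Type) [AddCommGroup τM] [Module A τM] [Module k τM] [IsScalarTower k A τM]
    [FiniteDimensional k τM] [SMulCommClass A k τM]
    (N : Type) [AddCommGroup N] [Module A N] [Module k N] [IsScalarTower k A N]
    [FiniteDimensional k N] [SMulCommClass A k N]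
    (dimVec : (X : Type) → [AddCommGroup X] → [Module A X] → Fin n → ℕ)
    (gM : Fin n → ℤ)
    -- the Auslander–Reiten formula characterizing the g-vector of M
    (hAR : ∀ (X : Type) [AddCommGroup X] [Module A X] [Module k X] [IsScalarTower k A X]
        [FiniteDimensional k X] [SMulCommClass A k X],
      (∑ i, gM i * (dimVec X i : ℤ)) =
        (Module.finrank k (X →ₗ[A] τM) : ℤ) - (Module.finrank k (M →ₗ[A] X) : ℤ))
    -- M is τ-rigid
    (hrigid : ∀ f : M →ₗ[A] τM, f = 0) :
    IsGreatest {x : ℤ | ∃ S : Submodule A N, x = ∑ i, gM i * (dimVec (N ⧸ S) i : ℤ)}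
      (Module.finrank k (N →ₗ[A] τM) : ℤ) := by
  haveI : FiniteDimensional k (N →ₗ[A] τM) :=
    FiniteDimensional.of_injective (LinearMap.restrictScalarsₗ k A N τM k)
      (LinearMap.restrictScalars_injective k)
  constructor
  · -- membership: take S to be the intersection of kernels of all maps N → τM
    set S : Submodule A N := ⨅ (f : N →ₗ[A] τM), LinearMap.ker f with hS
    refine ⟨S, ?_⟩
    haveI : FiniteDimensional k (N ⧸ S) :=
      Module.Finite.of_surjective ((S.mkQ).restrictScalars k) S.mkQ_surjective
    rw [hAR (N ⧸ S)]
    -- Hom(M, N ⧸ S) = 0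
    have hker : S ≤ LinearMap.ker (LinearMap.pi (fun f : N →ₗ[A] τM => f)) := by
      intro x hx
      simp only [LinearMap.mem_ker]
      ext g
      simp only [LinearMap.pi_apply, Pi.zero_apply]
      exact LinearMap.mem_ker.mp ((Submodule.mem_iInf _).mp hx g)
    set φ : (N ⧸ S) →ₗ[A] ((N →ₗ[A] τM) → τM) :=
      S.liftQ (LinearMap.pi fun f => f) hker with hφdef
    have hφ : Function.Injective φ := by
      rw [← LinearMap.ker_eq_bot, eq_bot_iff]
      intro x hx
      obtain ⟨y, rfl⟩ := S.mkQ_surjective x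
      simp only [LinearMap.mem_ker, hφdef, Submodule.mkQ_apply, Submodule.liftQ_apply] at hx
      have hy : y ∈ S := by
        rw [hS, Submodule.mem_iInf]
        intro f
        have := congrArg (fun h => h f) hx
        simpa using this
      simpa [Submodule.Quotient.mk_eq_zero] using hy
    haveI : Subsingleton (M →ₗ[A] (N ⧸ S)) := by
      constructor
      intro g₁ g₂
      have hz : ∀ g : M →ₗ[A] (N ⧸ S), g = 0 := by
        intro g
        ext m
        apply hφ
        simp only [LinearMap.zero_apply, map_zero]
        ext f
        have h0 : (LinearMap.proj f : ((N →ₗ[A] τM) → τM) →ₗ[A] τM) ∘ₗ φ ∘ₗ g = 0 :=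
          hrigid _
        have := congrArg (fun h => h m) (congrArg DFunLike.coe h0)
        simpa using this
      rw [hz g₁, hz g₂]
    have h0 : Module.finrank k (M →ₗ[A] (N ⧸ S)) = 0 :=
      Module.finrank_zero_of_subsingleton
    have hsurj : Function.Surjective (compQ (k := k) (τM := τM) S) := by
      intro f
      exact ⟨S.liftQ f (iInf_le (fun g : N →ₗ[A] τM => LinearMap.ker g) f),
        S.liftQ_mkQ f _⟩
    have heq : Module.finrank k ((N ⧸ S) →ₗ[A] τM) = Module.finrank k (N →ₗ[A] τM) :=
      LinearEquiv.finrank_eq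
        (LinearEquiv.ofBijective _ ⟨compQ_injective S, hsurj⟩)
    rw [h0, heq]
    ring
  · -- upper bound
    rintro x ⟨S, rfl⟩
    haveI : FiniteDimensional k (N ⧸ S) :=
      Module.Finite.of_surjective ((S.mkQ).restrictScalars k) S.mkQ_surjective
    rw [hAR (N ⧸ S)]
    have hle : Module.finrank k ((N ⧸ S) →ₗ[A] τM) ≤ Module.finrank k (N →ₗ[A] τM) :=
      LinearMap.finrank_le_finrank_of_injective (compQ_injective S)
    have : (0 : ℤ) ≤ (Module.finrank k (M →ₗ[A] (N ⧸ S)) : ℤ) := Int.natCast_nonneg _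
    omega
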